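/- Let (γ,ν): I → ℝ² × S¹ be a Legendre curve with γ(t)=(x(t),z(t)), ν(t)=(a(t),b(t)) and curvature (ℓ,β), and let 𝐳(t,θ)=(x(t)cosθ, x(t)sinθ, z(t)) be the surface of revolution around the z-axis. If x(t₀)=0, β(t₀)≠0, a(t₀)≠0 and b(t₀)≠0, then the map-germ 𝐳 at (t₀,θ₀) is 𝒜-equivalent to the cone: there exist diffeomorphism germs Φ of (ℝ²,(t₀,θ₀)) onto a neighbourhood of (0,θ₀) and Ψ of (ℝ³, 𝐳(t₀,θ₀)) onto a neighbourhood of the corresponding point such that Ψ ∘ 𝐳 = c ∘ Φ, where c(u,v) = (u cos v, u sin v, u). -/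

import Mathlib

open Real Set

/-- `f` is a germ of diffeomorphism at `p`, sending `p` to `q`: `f` is smooth near `p`
and has a smooth local inverse near `q`. -/
def DiffeoGermAt {E F : Type*} [NormedAddCommGroup E] [NormedSpace ℝ E]
    [NormedAddCommGroup F] [NormedSpace ℝ F] (f : E → F) (p : E) (q : F) : Prop :=
  f p = q ∧ ∃ (U : Set E) (V : Set F) (g : F → E),
    IsOpen U ∧ p ∈ U ∧ IsOpen V ∧ q ∈ V ∧
    ContDiffOn ℝ (⊤ : ℕ∞) f U ∧ ContDiffOn ℝ (⊤ : ℕ∞) g V ∧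
    Set.MapsTo f U V ∧ Set.MapsTo g V U ∧
    (∀ p' ∈ U, g (f p') = p') ∧ (∀ q' ∈ V, f (g q') = q')


lemma oneD_diffeoGerm (f : ℝ → ℝ) (t₀ : ℝ) (W : Set ℝ) (hW : IsOpen W) (htW : t₀ ∈ W)
    (hf : ContDiffOn ℝ (⊤ : ℕ∞) f W) (hd : deriv f t₀ ≠ 0) :
    DiffeoGermAt f t₀ (f t₀) := by
  have hone : (1 : WithTop ℕ∞) ≤ ((⊤ : ℕ∞) : WithTop ℕ∞) := by exact_mod_cast le_top
  have hne : ((⊤ : ℕ∞) : WithTop ℕ∞) ≠ 0 := by simp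
  have hfc : ContDiffAt ℝ (⊤ : ℕ∞) f t₀ := hf.contDiffAt (hW.mem_nhds htW)
  have hder : HasDerivAt f (deriv f t₀) t₀ := (hfc.differentiableAt hne).hasDerivAt
  have hfd := hder.hasFDerivAt_equiv hd
  set P := hfc.toOpenPartialHomeomorph f hfd hne with hP
  have hPcoe : (P : ℝ → ℝ) = f := rfl
  have hsrc : t₀ ∈ P.source := hfc.mem_toOpenPartialHomeomorph_source hfd hne
  have htgt : f t₀ ∈ P.target := hfc.image_mem_toOpenPartialHomeomorph_target hfd hne
  have hderC : ContinuousOn (deriv f) W := hf.continuousOn_deriv_of_isOpen hW hone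
  set U₀ : Set ℝ := W ∩ deriv f ⁻¹' {0}ᶜ with hU₀
  have hU₀o : IsOpen U₀ := hderC.isOpen_inter_preimage hW isOpen_compl_singleton
  have ht₀U₀ : t₀ ∈ U₀ := ⟨htW, hd⟩
  set V : Set ℝ := P.target ∩ P.symm ⁻¹' (P.source ∩ U₀) with hV
  have hVo : IsOpen V := P.isOpen_inter_preimage_symm (P.open_source.inter hU₀o)
  have hsymm0 : P.symm (f t₀) = t₀ := by rw [← hPcoe]; exact P.left_inv hsrc
  have htV : f t₀ ∈ V := ⟨htgt, by simp only [Set.mem_preimage, hsymm0]; exact ⟨hsrc, ht₀U₀⟩⟩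
  set U : Set ℝ := P.source ∩ (U₀ ∩ f ⁻¹' V) with hU
  have hUo : IsOpen U := P.open_source.inter
    (((hf.continuousOn).mono (inter_subset_left)).isOpen_inter_preimage hU₀o hVo)
  refine ⟨rfl, U, V, P.symm, hUo, ⟨hsrc, ht₀U₀, htV⟩, hVo, htV, hf.mono ?_, ?_, ?_, ?_, ?_, ?_⟩
  · exact fun p hp => hp.2.1.1
  · -- smoothness of the inverse on V
    intro q hq
    obtain ⟨hqT, hq2⟩ := hq
    rw [Set.mem_preimage] at hq2
    have hWq : P.symm q ∈ W := hq2.2.1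
    have hfq : ContDiffAt ℝ (⊤ : ℕ∞) f (P.symm q) := hf.contDiffAt (hW.mem_nhds hWq)
    have hdq : HasDerivAt f (deriv f (P.symm q)) (P.symm q) :=
      (hfq.differentiableAt hne).hasDerivAt
    have hdq' : HasDerivAt (P : ℝ → ℝ) (deriv f (P.symm q)) (P.symm q) := by
      rw [hPcoe]; exact hdq
    have hfq' : ContDiffAt ℝ (⊤ : ℕ∞) (P : ℝ → ℝ) (P.symm q) := by rw [hPcoe]; exact hfq
    exact (P.contDiffAt_symm_deriv hq2.2.2 hqT hdq' hfq').contDiffWithinAt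
  · exact fun p hp => hp.2.2
  · rintro q ⟨hqT, hq2⟩
    rw [Set.mem_preimage] at hq2
    refine ⟨hq2.1, hq2.2, ?_⟩
    have : f (P.symm q) = q := by rw [← hPcoe]; exact P.right_inv hqT
    rw [Set.mem_preimage, this]; exact ⟨hqT, hq2⟩
  · intro p hp; rw [← hPcoe]; exact P.left_inv hp.1
  · intro q hq; rw [← hPcoe]; exact P.right_inv hq.1

lemma DiffeoGermAt.prodLeft {f : ℝ → ℝ} {p q : ℝ} (hf : DiffeoGermAt f p q) (θ : ℝ) :
    DiffeoGermAt (fun s : ℝ × ℝ => (f s.1, s.2)) (p, θ) (q, θ) := by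
  obtain ⟨hfp, U, V, g, hUo, hpU, hVo, hqV, hfU, hgV, hfm, hgm, hgf, hfg⟩ := hf
  refine ⟨by simp [hfp], U ×ˢ Set.univ, V ×ˢ Set.univ, fun s => (g s.1, s.2),
    hUo.prod isOpen_univ, ⟨hpU, trivial⟩, hVo.prod isOpen_univ, ⟨hqV, trivial⟩,
    (hfU.comp contDiff_fst.contDiffOn fun s hs => hs.1).prodMk contDiff_snd.contDiffOn,
    (hgV.comp contDiff_fst.contDiffOn fun s hs => hs.1).prodMk contDiff_snd.contDiffOn,
    fun s hs => ⟨hfm hs.1, trivial⟩, fun s hs => ⟨hgm hs.1, trivial⟩,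
    fun s hs => by simp [Prod.ext_iff, hgf s.1 hs.1],
    fun s hs => by simp [Prod.ext_iff, hfg s.1 hs.1]⟩

lemma DiffeoGermAt.thirdCoord {h : ℝ → ℝ} {p q : ℝ} (hh : DiffeoGermAt h p q) (X Y : ℝ) :
    DiffeoGermAt (fun s : ℝ × ℝ × ℝ => (s.1, s.2.1, h s.2.2)) (X, Y, p) (X, Y, q) := by
  obtain ⟨hfp, U, V, g, hUo, hpU, hVo, hqV, hfU, hgV, hfm, hgm, hgf, hfg⟩ := hh
  refine ⟨by simp [hfp], Set.univ ×ˢ Set.univ ×ˢ U, Set.univ ×ˢ Set.univ ×ˢ V,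
    fun s => (s.1, s.2.1, g s.2.2),
    isOpen_univ.prod (isOpen_univ.prod hUo), ⟨trivial, trivial, hpU⟩,
    isOpen_univ.prod (isOpen_univ.prod hVo), ⟨trivial, trivial, hqV⟩,
    contDiff_fst.contDiffOn.prodMk ((contDiff_fst.comp contDiff_snd).contDiffOn.prodMk
      (hfU.comp (contDiff_snd.comp contDiff_snd).contDiffOn fun s hs => hs.2.2)),
    contDiff_fst.contDiffOn.prodMk ((contDiff_fst.comp contDiff_snd).contDiffOn.prodMk
      (hgV.comp (contDiff_snd.comp contDiff_snd).contDiffOn fun s hs => hs.2.2)),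
    fun s hs => ⟨trivial, trivial, hfm hs.2.2⟩, fun s hs => ⟨trivial, trivial, hgm hs.2.2⟩,
    fun s hs => by simp [Prod.ext_iff, hgf s.2.2 hs.2.2],
    fun s hs => by simp [Prod.ext_iff, hfg s.2.2 hs.2.2]⟩


/-- Let `(γ, ν)` be a Legendre curve with `γ = (x, z)`, `ν = (a, b)`,
curvature `(ℓ, β)`, and let `𝐳(t,θ) = (x t cos θ, x t sin θ, z t)` be the surface of
revolution around the z-axis.  If `x t₀ = 0`, `β t₀ ≠ 0`, `a t₀ ≠ 0` and `b t₀ ≠ 0`, then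
the germ of `𝐳` at `(t₀, θ₀)` is 𝒜-equivalent to the cone `c(u,v) = (u cos v, u sin v, u)`
at `(0, θ₀)`. -/
theorem surface_of_revolution_diffeomorphic_to_cone
    (x z a b ℓ β : ℝ → ℝ) (t₀ θ₀ : ℝ)
    (hx : ContDiff ℝ (⊤ : ℕ∞) x) (hz : ContDiff ℝ (⊤ : ℕ∞) z)
    (ha : ContDiff ℝ (⊤ : ℕ∞) a) (hb : ContDiff ℝ (⊤ : ℕ∞) b)
    (hunit : ∀ t, a t ^ 2 + b t ^ 2 = 1)
    (hdx : ∀ t, deriv x t = -(β t) * b t)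
    (hdz : ∀ t, deriv z t = β t * a t)
    (hda : ∀ t, deriv a t = -(ℓ t) * b t)
    (hdb : ∀ t, deriv b t = ℓ t * a t)
    (hx0 : x t₀ = 0) (hβ0 : β t₀ ≠ 0) (ha0 : a t₀ ≠ 0) (hb0 : b t₀ ≠ 0) :
    ∃ (Φ : ℝ × ℝ → ℝ × ℝ) (Ψ : ℝ × ℝ × ℝ → ℝ × ℝ × ℝ),
      DiffeoGermAt Φ (t₀, θ₀) (0, θ₀) ∧
      DiffeoGermAt Ψ (x t₀ * cos θ₀, x t₀ * sin θ₀, z t₀) (0, 0, 0) ∧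
      ∀ᶠ p : ℝ × ℝ in nhds (t₀, θ₀),
        Ψ (x p.1 * cos p.2, x p.1 * sin p.2, z p.1) =
          ((Φ p).1 * cos (Φ p).2, (Φ p).1 * sin (Φ p).2, (Φ p).1) := by
  have hone : (1 : WithTop ℕ∞) ≤ ((⊤ : ℕ∞) : WithTop ℕ∞) := by exact_mod_cast le_top
  have hne : ((⊤ : ℕ∞) : WithTop ℕ∞) ≠ 0 := by simp
  have hdx0 : deriv x t₀ ≠ 0 := by
    rw [hdx]; exact mul_ne_zero (neg_ne_zero.mpr hβ0) hb0
  have hdz0 : deriv z t₀ ≠ 0 := by rw [hdz]; exact mul_ne_zero hβ0 ha0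
  have hxg : DiffeoGermAt x t₀ 0 := by
    have := oneD_diffeoGerm x t₀ Set.univ isOpen_univ trivial hx.contDiffOn hdx0
    rwa [hx0] at this
  obtain ⟨-, Uz, Vz, g, hUzo, htUz, hVzo, hzVz, hzU, hgV, hzm, hgm, hgz, hzg'⟩ :=
    oneD_diffeoGerm z t₀ Set.univ isOpen_univ trivial hz.contDiffOn hdz0
  set h : ℝ → ℝ := fun q => x (g q) with hhdef
  have hgt : g (z t₀) = t₀ := hgz t₀ htUz
  have hhz : h (z t₀) = 0 := by rw [hhdef]; simp only [hgt]; exact hx0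
  have hhC : ContDiffOn ℝ (⊤ : ℕ∞) h Vz := hx.comp_contDiffOn hgV
  have hgd : HasDerivAt g (deriv g (z t₀)) (z t₀) :=
    ((hgV.contDiffAt (hVzo.mem_nhds hzVz)).differentiableAt hne).hasDerivAt
  have hzd : HasDerivAt z (deriv z t₀) (g (z t₀)) := by
    rw [hgt]; exact (hz.differentiable hne t₀).hasDerivAt
  have hcomp : HasDerivAt (fun q => z (g q)) (deriv z t₀ * deriv g (z t₀)) (z t₀) :=
    hzd.comp (z t₀) hgd
  have hEq : (fun q => z (g q)) =ᶠ[nhds (z t₀)] id :=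
    Filter.eventuallyEq_of_mem (hVzo.mem_nhds hzVz) fun q hq => hzg' q hq
  have h1 : deriv z t₀ * deriv g (z t₀) = 1 :=
    (hcomp.congr_of_eventuallyEq hEq.symm).unique (hasDerivAt_id _)
  have hgd0 : deriv g (z t₀) ≠ 0 := by
    intro h0; rw [h0, mul_zero] at h1; exact zero_ne_one h1
  have hxd : HasDerivAt x (deriv x t₀) (g (z t₀)) := by
    rw [hgt]; exact (hx.differentiable hne t₀).hasDerivAt
  have hhd : HasDerivAt h (deriv x t₀ * deriv g (z t₀)) (z t₀) := hxd.comp (z t₀) hgd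
  have hhd0 : deriv h (z t₀) ≠ 0 := by rw [hhd.deriv]; exact mul_ne_zero hdx0 hgd0
  have hhg : DiffeoGermAt h (z t₀) 0 := by
    have := oneD_diffeoGerm h (z t₀) Vz hVzo hzVz hhC hhd0
    rwa [hhz] at this
  refine ⟨fun s => (x s.1, s.2), fun s => (s.1, s.2.1, h s.2.2), hxg.prodLeft θ₀, ?_, ?_⟩
  · have := hhg.thirdCoord 0 0
    simpa [hx0] using this
  · refine Filter.eventually_of_mem
      (prod_mem_nhds (hUzo.mem_nhds htUz) Filter.univ_mem) ?_
    rintro ⟨t, θ⟩ ⟨htU, -⟩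
    have hht : h (z t) = x t := by rw [hhdef]; simp only [hgz t htU]
    simp [hht]
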